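/- If the branching random walk is subcritical (ψ(0) < 0), there exists θ > 0 with ψ(θ) < ∞, the L log L condition holds, and E(Z_1(ℝ) log₊ Z_1(ℝ)) < ∞, then the decoration measure D_∞^θ is almost surely finite: P(D_∞^θ(ℝ) < ∞) = 1. -/

import Mathlib

open MeasureTheory ProbabilityTheory Filter Set
open scoped ENNReal NNReal Topology Classical

noncomputable section

open MeasureTheory ProbabilityTheory Filter Set
open scoped ENNReal NNReal Topology Classical

noncomputable section

abbrev Label := List ℕ

/-- exponential `EReal → ℝ≥0∞` with `exp ⊥ = 0`, `exp ⊤ = ∞`. -/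
def eexp (x : EReal) : ℝ≥0∞ :=
  if x = ⊥ then 0 else if x = ⊤ then ⊤ else ENNReal.ofReal (Real.exp x.toReal)

/-- logarithm `ℝ≥0∞ → EReal`. -/
def elog (y : ℝ≥0∞) : EReal :=
  if y = 0 then ⊥ else if y = ⊤ then ⊤ else ((Real.log y.toReal : ℝ) : EReal)

/-- number of atoms of an extended-real position lying in a real set. -/
def cnt (A : Set ℝ) (x : EReal) : ℝ≥0∞ :=
  Set.indicator (Real.toEReal '' A) (fun _ => (1 : ℝ≥0∞)) x

/-- evaluation of a nonnegative test function at an extended position (dead particles ignored). -/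
def evalTest (φ : ℝ → ℝ) (x : EReal) : ℝ≥0∞ :=
  if x = ⊥ ∨ x = ⊤ then 0 else ENNReal.ofReal (φ x.toReal)

/-- `e^{-x}` for `x : ℝ≥0∞`. -/
def nexp (x : ℝ≥0∞) : ℝ≥0∞ :=
  if x = ⊤ then 0 else ENNReal.ofReal (Real.exp (-x.toReal))

/-- `log₊` on `ℝ≥0∞`. -/
def plog (x : ℝ≥0∞) : ℝ≥0∞ :=
  if x = ⊤ then ⊤ else ENNReal.ofReal (Real.log (max x.toReal 1))

variable {Ω : Type} [MeasurableSpace Ω]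

/-- A branching random walk: i.i.d. displacement point processes indexed by Ulam–Harris labels
(the label of a particle is the list of child indices along its ancestral line, most recent
first); `disp u ω i` is the displacement of the `i`-th child of particle `u`, equal to `⊥`
if this child does not exist. -/
structure BRW (Ω : Type) [MeasurableSpace Ω] (P : Measure Ω) where
  disp : Label → Ω → ℕ → EReal
  meas : ∀ u, Measurable (disp u)
  indep : iIndepFun (m := fun _ => inferInstance) disp P
  ident : ∀ u v, IdentDistrib (disp u) (disp v) P P

namespace BRW

variable {P : Measure Ω}

/-- position `V(u)` of the particle with label `u` (`⊥` if it is dead). -/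
def V (b : BRW Ω P) : Label → Ω → EReal
  | [], _ => 0
  | i :: u, ω => b.V u ω + b.disp u ω i

/-- maximal displacement at generation `n`. -/
def M (b : BRW Ω P) (n : ℕ) (ω : Ω) : EReal :=
  ⨆ u : {u : Label // u.length = n}, b.V u ω

/-- `E (Σ_{|u|=1} e^{θ V(u)})`. -/
def Lap (b : BRW Ω P) (θ : ℝ) : ℝ≥0∞ :=
  ∫⁻ ω, ∑' i : ℕ, (if b.V [i] ω = ⊥ then 0 else eexp ((θ : EReal) * b.V [i] ω)) ∂P

/-- the log-Laplace transform `ψ(θ)`. -/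
def ψe (b : BRW Ω P) (θ : ℝ) : EReal := elog (b.Lap θ)

/-- the Legendre transform `ψ*(x) = sup_{θ ≥ 0} (θ x − ψ(θ))`. -/
def ψStar (b : BRW Ω P) (x : ℝ) : EReal :=
  ⨆ θ : {θ : ℝ // 0 ≤ θ}, ((θ.1 * x : ℝ) : EReal) - b.ψe θ.1

/-- `x* = inf_{θ>0} ψ(θ)/θ`. -/
def xstar (b : BRW Ω P) : EReal :=
  ⨅ θ : {θ : ℝ // 0 < θ}, b.ψe θ.1 * ((θ.1⁻¹ : ℝ) : EReal)

/-- number of particles alive at generation `n`, i.e. `Z_n(ℝ)`. -/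
def ZR (b : BRW Ω P) (n : ℕ) (ω : Ω) : ℝ≥0∞ :=
  ∑' u : {u : Label // u.length = n}, if b.V u ω = ⊥ then 0 else 1

/-- number of particles at generation `n` located in `A`, i.e. `Z_n(A)`. -/
def Zset (b : BRW Ω P) (n : ℕ) (A : Set ℝ) (ω : Ω) : ℝ≥0∞ :=
  ∑' u : {u : Label // u.length = n}, cnt A (b.V u ω)

/-- mass of the extremal process `ℰ_n = Σ_{|u|=n} δ_{V(u)−M_n}` on a set `A`. -/
def Emeas (b : BRW Ω P) (n : ℕ) (ω : Ω) (A : Set ℝ) : ℝ≥0∞ :=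
  ∑' u : {u : Label // u.length = n}, cnt A (b.V u ω - b.M n ω)

/-- `ℰ_n(φ) = Σ_{|u|=n} φ(V(u)−M_n)`. -/
def Etest (b : BRW Ω P) (n : ℕ) (φ : ℝ → ℝ) (ω : Ω) : ℝ≥0∞ :=
  ∑' u : {u : Label // u.length = n}, evalTest φ (b.V u ω - b.M n ω)

/-- `W_1^θ = Σ_{|u|=1} e^{θ V(u)}`. -/
def W1 (b : BRW Ω P) (θ : ℝ) (ω : Ω) : ℝ≥0∞ :=
  ∑' i : ℕ, (if b.V [i] ω = ⊥ then 0 else eexp ((θ : EReal) * b.V [i] ω))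

/-- the `L log L` integrability condition (as3). -/
def LlogL (b : BRW Ω P) (θ : ℝ) : Prop :=
  ∫⁻ ω, b.W1 θ ω * plog (b.W1 θ ω) ∂P < ⊤

/-- the branching random walk is non-lattice (as4). -/
def NonLattice (b : BRW Ω P) : Prop :=
  ∀ c d : ℝ,
    P {ω | ∀ i : ℕ, b.V [i] ω ≠ ⊥ → ∃ k : ℤ, b.V [i] ω = ((c + d * k : ℝ) : EReal)} < 1

/-- `σ² = E (Σ_{|u|=1} (V(u) − ψ'(θ))² e^{θV(u)})` (as2). -/
def VarCond (b : BRW Ω P) (θ ψ' σ2 : ℝ) : Prop :=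
  (∫⁻ ω, ∑' i : ℕ, (if b.V [i] ω = ⊥ then 0 else
      ENNReal.ofReal (((b.V [i] ω).toReal - ψ') ^ 2) * eexp ((θ : EReal) * b.V [i] ω)) ∂P)
    = ENNReal.ofReal σ2

end BRW


/-- index type for the independent ingredients of the spine construction. -/
def SpIdx : Type := ℕ ⊕ (ℕ × ℕ)

def SpType : SpIdx → Type :=
  Sum.elim (fun _ => (ℕ → EReal) × ℕ) (fun _ => Label → EReal)

instance : ∀ i : SpIdx, MeasurableSpace (SpType i) := fun i => by
  cases i with
  | inl k => exact (inferInstance : MeasurableSpace ((ℕ → EReal) × ℕ))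
  | inr p => exact (inferInstance : MeasurableSpace (Label → EReal))

/-- The time-reversed spine construction for a branching random walk:
`B k · i = b_{k+1}(i)` is the displacement point process of the children of the spine at
time `k+1`, `W k = w^{(k+1)}` the spine index, `Vc i k = V^{(i,k+1)}` independent copies of
the branching random walk; `(B k, W k)` has the size-biased law with spine choice, all the
ingredients are independent, and the spine step has mean `ψ' = ψ'(θ)` with
`ψ = ψ(θ) < ∞`. -/
structure SpineSetup (Ω : Type) [MeasurableSpace Ω] (P : Measure Ω) (θ ψ ψ' : ℝ)
    extends BRW Ω P where
  B : ℕ → Ω → ℕ → EReal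
  W : ℕ → Ω → ℕ
  Vc : ℕ → ℕ → Label → Ω → EReal
  lapEq : toBRW.Lap θ = ENNReal.ofReal (Real.exp ψ)
  sbLaw : ∀ k : ℕ, ∀ f : (ℕ → EReal) × ℕ → ℝ≥0∞, Measurable f →
    ∫⁻ ω, f (B k ω, W k ω) ∂P
      = ∫⁻ ω, ∑' i : ℕ, (if toBRW.V [i] ω = ⊥ then 0 else
          eexp ((θ : EReal) * toBRW.V [i] ω - (ψ : EReal)) *
            f (fun j => toBRW.V [j] ω, i)) ∂P
  copyLaw : ∀ i k : ℕ, ∀ f : (Label → EReal) → ℝ≥0∞, Measurable f →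
    ∫⁻ ω, f (fun u => Vc i k u ω) ∂P = ∫⁻ ω, f (fun u => toBRW.V u ω) ∂P
  indepAll : iIndepFun (β := SpType) (m := fun i => inferInstance)
    (fun i => Sum.rec (motive := fun i => Ω → SpType i)
      (fun k ω => (B k ω, W k ω)) (fun p ω u => Vc p.1 p.2 u ω) i) P
  stepInt : Integrable (fun ω => (B 0 ω (W 0 ω)).toReal) P
  stepMean : ∫ ω, (B 0 ω (W 0 ω)).toReal ∂P = ψ'

namespace SpineSetup

variable {P : Measure Ω} {θ ψ ψ' : ℝ}

/-- the spine random walk `S_n = Σ_{k=1}^n b_k(w^{(k)})`. -/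
def S (s : SpineSetup Ω P θ ψ ψ') (n : ℕ) (ω : Ω) : ℝ :=
  ∑ k ∈ Finset.range n, (s.B k ω (s.W k ω)).toReal

/-- the atom `b_{k+1}(i) + V^{(i,k+1)}(u) − S_{k+1}` of the decoration measure. -/
def atom (s : SpineSetup Ω P θ ψ ψ') (k i : ℕ) (u : Label) (ω : Ω) : EReal :=
  s.B k ω i + s.Vc i k u ω - ((s.S (k + 1) ω : ℝ) : EReal)

/-- mass of `D_n^θ` on a set `A ⊆ ℝ`. -/
def Dn (s : SpineSetup Ω P θ ψ ψ') (n : ℕ) (ω : Ω) (A : Set ℝ) : ℝ≥0∞ :=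
  cnt A 0 + ∑ k ∈ Finset.range n, ∑' i : ℕ, ∑' u : {u : Label // u.length = k},
    if i = s.W k ω then 0 else cnt A (s.atom k i u ω)

/-- mass of `D_∞^θ` on a set `A ⊆ ℝ`. -/
def Dinf (s : SpineSetup Ω P θ ψ ψ') (ω : Ω) (A : Set ℝ) : ℝ≥0∞ :=
  cnt A 0 + ∑' k : ℕ, ∑' i : ℕ, ∑' u : {u : Label // u.length = k},
    if i = s.W k ω then 0 else cnt A (s.atom k i u ω)

/-- `D_n^θ(φ)` for a nonnegative test function `φ`. -/
def Dtest (s : SpineSetup Ω P θ ψ ψ') (n : ℕ) (φ : ℝ → ℝ) (ω : Ω) : ℝ≥0∞ :=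
  ENNReal.ofReal (φ 0) + ∑ k ∈ Finset.range n, ∑' i : ℕ, ∑' u : {u : Label // u.length = k},
    if i = s.W k ω then 0 else evalTest φ (s.atom k i u ω)

/-- `D_∞^θ(φ)` for a nonnegative test function `φ`. -/
def DtestInf (s : SpineSetup Ω P θ ψ ψ') (φ : ℝ → ℝ) (ω : Ω) : ℝ≥0∞ :=
  ENNReal.ofReal (φ 0) + ∑' k : ℕ, ∑' i : ℕ, ∑' u : {u : Label // u.length = k},
    if i = s.W k ω then 0 else evalTest φ (s.atom k i u ω)

/-- `C(θ) = E ( (1/D_∞^θ({0})) 1_{D_∞^θ((0,∞)) = 0} )`. -/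
def Cmass (s : SpineSetup Ω P θ ψ ψ') : ℝ≥0∞ :=
  ∫⁻ ω, (if s.Dinf ω (Set.Ioi 0) = 0 then (s.Dinf ω {0})⁻¹ else 0) ∂P

/-- the event `A_{n+1,ε}` of Lemma 2.3. -/
def Aev (s : SpineSetup Ω P θ ψ ψ') (n : ℕ) (ε : ℝ) : Set Ω :=
  {ω | ∀ ℓ, n ≤ ℓ →
    (⨆ k : ℕ, (s.B ℓ ω k + ⨆ u : {u : Label // u.length = ℓ}, s.Vc k ℓ u ω))
      - ((s.S (ℓ + 1) ω : ℝ) : EReal) < ((-ε * (ℓ + 1) : ℝ) : EReal)}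

end SpineSetup

section Toolkit

lemma measurable_add2_ereal : Measurable (fun p : EReal × EReal => p.1 + p.2) := by
  have : (fun p : EReal × EReal => p.1 + p.2) = fun p =>
      if p.1 = ⊥ ∨ p.2 = ⊥ then ⊥ else if p.1 = ⊤ ∨ p.2 = ⊤ then ⊤
      else ((p.1.toReal + p.2.toReal : ℝ) : EReal) := by
    funext p
    rcases p with ⟨x, y⟩
    induction x using EReal.rec <;> induction y using EReal.rec <;>
      simp [EReal.bot_add, EReal.add_bot, ← EReal.coe_add]
  rw [this]
  refine Measurable.ite ?_ measurable_const (Measurable.ite ?_ measurable_const ?_)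
  · exact ((measurable_fst (measurableSet_singleton (⊥:EReal))).union
      (measurable_snd (measurableSet_singleton (⊥:EReal))))
  · exact ((measurable_fst (measurableSet_singleton (⊤:EReal))).union
      (measurable_snd (measurableSet_singleton (⊤:EReal))))
  · exact ((measurable_fst.ereal_toReal.add measurable_snd.ereal_toReal)).coe_real_ereal

lemma Measurable.ereal_add {α : Type*} [MeasurableSpace α] {f g : α → EReal}
    (hf : Measurable f) (hg : Measurable g) : Measurable (fun x => f x + g x) :=
  measurable_add2_ereal.comp (hf.prodMk hg)

lemma measurable_eexp : Measurable eexp := by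
  unfold eexp
  refine Measurable.ite (measurableSet_singleton (⊥:EReal)) measurable_const
    (Measurable.ite (measurableSet_singleton (⊤:EReal)) measurable_const ?_)
  exact (measurable_ereal_toReal.exp).ennreal_ofReal

lemma measurable_const_mul_ereal {θ : ℝ} (hθ : 0 < θ) :
    Measurable (fun x : EReal => (θ : EReal) * x) := by
  have : (fun x : EReal => (θ : EReal) * x) = fun x =>
      if x = ⊥ then ⊥ else if x = ⊤ then ⊤ else ((θ * x.toReal : ℝ) : EReal) := by
    funext x
    induction x using EReal.rec with
    | bot => simp [EReal.coe_mul_bot_of_pos hθ]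
    | coe y => simp [← EReal.coe_mul]
    | top => simp [EReal.coe_mul_top_of_pos hθ]
  rw [this]
  refine Measurable.ite (measurableSet_singleton _) measurable_const
    (Measurable.ite (measurableSet_singleton _) measurable_const ?_)
  exact (measurable_ereal_toReal.const_mul θ).coe_real_ereal

lemma measurable_sub_const_ereal (c : ℝ) :
    Measurable (fun x : EReal => x - (c : EReal)) := by
  have : (fun x : EReal => x - (c : EReal)) = fun x =>
      if x = ⊥ then ⊥ else if x = ⊤ then ⊤ else ((x.toReal - c : ℝ) : EReal) := by
    funext x
    induction x using EReal.rec with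
    | bot => simp [EReal.bot_sub]
    | coe y => simp [← EReal.coe_sub]
    | top => simp [EReal.top_sub_coe]
  rw [this]
  refine Measurable.ite (measurableSet_singleton _) measurable_const
    (Measurable.ite (measurableSet_singleton _) measurable_const ?_)
  exact (measurable_ereal_toReal.sub_const c).coe_real_ereal

lemma eexp_sub_coe (x : EReal) (c : ℝ) :
    eexp (x - (c : EReal)) = eexp x * ENNReal.ofReal (Real.exp (-c)) := by
  induction x using EReal.rec with
  | bot => simp [eexp, EReal.bot_sub]
  | coe y =>
      rw [← EReal.coe_sub]
      simp only [eexp, EReal.coe_ne_bot, EReal.coe_ne_top, if_false, EReal.toReal_coe]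
      rw [← ENNReal.ofReal_mul (Real.exp_nonneg _), ← Real.exp_add]
      ring_nf
  | top =>
      have h1 : ((⊤ : EReal) - (c : EReal)) = ⊤ := EReal.top_sub_coe c
      have h2 : eexp ⊤ = ⊤ := by simp [eexp]
      rw [h1, h2, ENNReal.top_mul]
      simp [ENNReal.ofReal_eq_zero, not_le, Real.exp_pos]

/-- `log₊` comparison: `a log₊ b ≤ a log₊ a + b` on reals. -/
lemma real_mul_plog_le {a b : ℝ} (ha : 0 ≤ a) (hb : 0 ≤ b) :
    a * Real.log (max b 1) ≤ a * Real.log (max a 1) + b := by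
  rcases le_or_gt (max b 1) (max a 1) with h | h
  · have : Real.log (max b 1) ≤ Real.log (max a 1) :=
      Real.log_le_log (by positivity) h
    nlinarith [mul_le_mul_of_nonneg_left this ha]
  · have hb1 : (1:ℝ) < max b 1 := lt_of_le_of_lt (le_max_right _ _) h
    have hbmax : max b 1 = b := by
      rcases max_cases b 1 with ⟨h1, _⟩ | ⟨h1, h2⟩
      · exact h1
      · rw [h1] at hb1; linarith
    rw [hbmax] at h hb1 ⊢
    have hbpos : (0:ℝ) < b := by linarith
    rcases le_or_gt a 1 with ha1 | ha1
    · have h1 : a * Real.log b ≤ 1 * Real.log b :=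
        mul_le_mul_of_nonneg_right ha1 (Real.log_nonneg hb1.le)
      have h2 : Real.log b ≤ b - 1 := Real.log_le_sub_one_of_pos hbpos
      have h3 : 0 ≤ a * Real.log (max a 1) := by
        apply mul_nonneg ha (Real.log_nonneg (le_max_right _ _))
      nlinarith
    · have hamax : max a 1 = a := max_eq_left ha1.le
      rw [hamax]
      have hapos : (0:ℝ) < a := by linarith
      have hlog : Real.log b = Real.log a + Real.log (b / a) := by
        rw [Real.log_div (ne_of_gt hbpos) (ne_of_gt hapos)]; ring
      have h2 : Real.log (b / a) ≤ b / a - 1 :=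
        Real.log_le_sub_one_of_pos (by positivity)
      have h3 : a * Real.log (b / a) ≤ a * (b / a - 1) :=
        mul_le_mul_of_nonneg_left h2 ha
      have h4 : a * (b / a - 1) ≤ b := by
        rw [mul_sub, mul_div_cancel₀ _ (ne_of_gt hapos)]; linarith
      rw [hlog]; nlinarith

lemma mul_plog_le (a b : ℝ≥0∞) : a * plog b ≤ a * plog a + b := by
  rcases eq_or_ne b ⊤ with rfl | hb
  · rcases eq_or_ne a 0 with rfl | ha
    · simp
    · have : a * plog ⊤ = ⊤ := by
        rw [show plog ⊤ = ⊤ from if_pos rfl, ENNReal.mul_top ha]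
      rw [this]
      simp
  rcases eq_or_ne a ⊤ with rfl | ha
  · have : (⊤:ℝ≥0∞) * plog ⊤ = ⊤ := by
      rw [show plog ⊤ = ⊤ from if_pos rfl]; simp
    rw [this]
    exact le_top.trans (by simp)
  · rw [show plog b = ENNReal.ofReal (Real.log (max b.toReal 1)) from if_neg hb,
        show plog a = ENNReal.ofReal (Real.log (max a.toReal 1)) from if_neg ha]
    nth_rewrite 1 [← ENNReal.ofReal_toReal ha]
    nth_rewrite 2 [← ENNReal.ofReal_toReal ha]
    nth_rewrite 2 [← ENNReal.ofReal_toReal hb]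
    rw [← ENNReal.ofReal_mul ENNReal.toReal_nonneg, ← ENNReal.ofReal_mul ENNReal.toReal_nonneg,
      ← ENNReal.ofReal_add (mul_nonneg ENNReal.toReal_nonneg (Real.log_nonneg (le_max_right _ _))) ENNReal.toReal_nonneg]
    exact ENNReal.ofReal_le_ofReal
      (real_mul_plog_le ENNReal.toReal_nonneg ENNReal.toReal_nonneg)

lemma cnt_le_one (A : Set ℝ) (x : EReal) : cnt A x ≤ 1 := by
  unfold cnt
  rw [Set.indicator_apply]
  split <;> simp

lemma ne_bot_ne_top_of_cnt_ne_zero {A : Set ℝ} {x : EReal} (h : cnt A x ≠ 0) :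
    x ≠ ⊥ ∧ x ≠ ⊤ := by
  unfold cnt at h
  rw [Set.indicator_apply] at h
  split at h
  · rename_i hx
    obtain ⟨r, _, rfl⟩ := hx
    simp
  · simp at h

lemma cnt_univ_zero : cnt Set.univ (0 : EReal) = 1 := by
  unfold cnt
  rw [Set.indicator_apply, if_pos]
  exact ⟨0, Set.mem_univ _, by simp⟩


variable {Ω : Type} [MeasurableSpace Ω]

lemma meas_add_lintegral_compl_le (P : Measure Ω) [IsProbabilityMeasure P] (A : Set Ω) :
    P A + ∫⁻ ω, Aᶜ.indicator (fun _ => (1:ℝ≥0∞)) ω ∂P ≤ 1 := by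
  obtain ⟨g, gm, gle, geq⟩ :=
    exists_measurable_le_lintegral_eq P (Aᶜ.indicator fun _ => (1:ℝ≥0∞))
  rw [geq]
  have hg1 : ∀ ω, g ω ≤ 1 := by
    intro ω
    refine (gle ω).trans ?_
    rw [Set.indicator_apply]; split <;> simp
  have hsub : A ⊆ {ω | g ω = 0} := by
    intro ω hω
    have := gle ω
    rw [Set.indicator_of_notMem (by simpa using hω)] at this
    exact le_antisymm this (zero_le)
  have hmeas0 : MeasurableSet {ω | g ω = 0} := gm (measurableSet_singleton 0)
  calc P A + ∫⁻ ω, g ω ∂P ≤ P {ω | g ω = 0} + ∫⁻ ω, g ω ∂P :=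
        add_le_add_left (measure_mono hsub) _
    _ = ∫⁻ ω, ({ω | g ω = 0}.indicator (fun _ => 1) ω + g ω) ∂P := by
        rw [lintegral_add_left ((measurable_const).indicator hmeas0)]
        congr 1
        exact (lintegral_indicator_one hmeas0).symm
    _ ≤ ∫⁻ _, 1 ∂P := by
        refine lintegral_mono fun ω => ?_
        rw [Set.indicator_apply]
        split
        · rename_i h; rw [h]; simp
        · simpa using hg1 ω
    _ = 1 := by simp

end Toolkit

section BRWAux

/-- indicator that an extended-real position is alive. -/
def aliveE (x : EReal) : ℝ≥0∞ := if x = ⊥ then 0 else 1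

lemma measurable_aliveE : Measurable aliveE := by
  unfold aliveE
  exact Measurable.ite (measurableSet_singleton _) measurable_const measurable_const

lemma aliveE_le_one (x : EReal) : aliveE x ≤ 1 := by
  unfold aliveE; split <;> simp

/-- number of alive coordinates of a point process. -/
def cntAlive (g : ℕ → EReal) : ℝ≥0∞ := ∑' i, aliveE (g i)

lemma measurable_cntAlive : Measurable cntAlive :=
  Measurable.ennreal_tsum fun i => measurable_aliveE.comp (measurable_pi_apply i)

/-- number of alive particles at generation `k` of a labelled family. -/
def cntAliveL (k : ℕ) (g : Label → EReal) : ℝ≥0∞ :=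
  ∑' u : {u : Label // u.length = k}, aliveE (g u.1)

lemma measurable_cntAliveL (k : ℕ) : Measurable (cntAliveL k) :=
  Measurable.ennreal_tsum fun u => measurable_aliveE.comp (measurable_pi_apply u.1)

lemma finite_alive_of_cntAlive_ne_top {g : ℕ → EReal} (h : cntAlive g ≠ ⊤) :
    {i | g i ≠ ⊥}.Finite := by
  by_contra hinf
  apply h
  have h1 : ∀ i, aliveE (g i) = Set.indicator {i | g i ≠ ⊥} (fun _ => 1) i := by
    intro i
    rw [Set.indicator_apply]
    by_cases hi : g i = ⊥ <;> simp [aliveE, hi]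
  rw [cntAlive, tsum_congr h1, ← tsum_subtype]
  have : Infinite ({i | g i ≠ ⊥} : Set ℕ) := Set.infinite_coe_iff.mpr hinf
  exact ENNReal.tsum_const_eq_top_of_ne_zero one_ne_zero

namespace BRW

variable {Ω : Type} [MeasurableSpace Ω] {P : Measure Ω}

lemma measurable_V (b : BRW Ω P) : ∀ u : Label, Measurable (b.V u)
  | [] => measurable_const
  | (i :: u) => by
      have h1 := measurable_V b u
      have h2 : Measurable fun ω => b.disp u ω i := (measurable_pi_apply i).comp (b.meas u)
      exact h1.ereal_add h2

lemma ZR_eq_tsum (b : BRW Ω P) (n : ℕ) (ω : Ω) :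
    b.ZR n ω = ∑' u : {u : Label // u.length = n}, aliveE (b.V u.1 ω) := rfl

lemma measurable_ZR (b : BRW Ω P) (n : ℕ) : Measurable (b.ZR n) := by
  have : b.ZR n = fun ω => ∑' u : {u : Label // u.length = n}, aliveE (b.V u.1 ω) := rfl
  rw [this]
  exact Measurable.ennreal_tsum fun u => measurable_aliveE.comp (b.measurable_V u.1)

/-- labels of length one are indexed by `ℕ`. -/
def lenOneEquiv : ℕ ≃ {u : Label // u.length = 1} where
  toFun i := ⟨[i], rfl⟩
  invFun u := u.1.headI
  left_inv i := rfl
  right_inv := by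
    rintro ⟨(_ | ⟨a, (_ | ⟨c, t⟩)⟩), hu⟩
    · simp at hu
    · rfl
    · simp at hu

/-- labels of length `n+1` split as a head index and a tail of length `n`. -/
def consEquiv (n : ℕ) : ({v : Label // v.length = n} × ℕ) ≃ {u : Label // u.length = n + 1} where
  toFun p := ⟨p.2 :: p.1.1, by simp [p.1.2]⟩
  invFun u := (⟨u.1.tail, by
      rcases u with ⟨(_ | ⟨a, t⟩), hu⟩
      · simp at hu
      · simpa using Nat.succ_injective hu⟩, u.1.headI)
  left_inv p := by
    rcases p with ⟨⟨v, hv⟩, i⟩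
    rfl
  right_inv := by
    rintro ⟨(_ | ⟨a, t⟩), hu⟩
    · simp at hu
    · rfl

lemma ZR_one_eq (b : BRW Ω P) (ω : Ω) :
    b.ZR 1 ω = ∑' i : ℕ, aliveE (b.V [i] ω) := by
  rw [ZR_eq_tsum]
  exact (lenOneEquiv.tsum_eq fun u => aliveE (b.V u.1 ω)).symm

lemma V_single (b : BRW Ω P) (i : ℕ) (ω : Ω) : b.V [i] ω = b.disp [] ω i := by
  show b.V [] ω + b.disp [] ω i = b.disp [] ω i
  show (0 : EReal) + b.disp [] ω i = b.disp [] ω i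
  rw [zero_add]

lemma lintegral_cntAlive_disp (b : BRW Ω P) (v : Label) :
    ∫⁻ ω, cntAlive (b.disp v ω) ∂P = ∫⁻ ω, b.ZR 1 ω ∂P := by
  have h1 : IdentDistrib (fun ω => cntAlive (b.disp v ω)) (fun ω => cntAlive (b.disp [] ω)) P P :=
    (b.ident v List.nil).comp measurable_cntAlive
  rw [h1.lintegral_eq]
  refine lintegral_congr fun ω => ?_
  rw [ZR_one_eq]
  unfold cntAlive
  exact tsum_congr fun i => by rw [V_single]

/-- the finite set of strict ancestors of a label. -/
def anc (v : Label) : Finset Label := v.tails.toFinset.erase v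

lemma anc_cons (i : ℕ) (v : Label) : anc (i :: v) = v.tails.toFinset := by
  unfold anc
  rw [List.tails_cons, List.toFinset_cons, Finset.erase_insert]
  intro h
  rw [List.mem_toFinset, List.mem_tails] at h
  have := List.IsSuffix.length_le h
  simp at this

lemma mem_anc_cons (i : ℕ) (v : Label) : v ∈ anc (i :: v) := by
  rw [anc_cons, List.mem_toFinset, List.mem_tails]

lemma anc_subset_anc_cons (i : ℕ) (v : Label) : anc v ⊆ anc (i :: v) := by
  rw [anc_cons]
  exact Finset.erase_subset _ _

lemma factorV (b : BRW Ω P) : ∀ v : Label, ∃ g : ((w : anc v) → (ℕ → EReal)) → EReal,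
    Measurable g ∧ ∀ ω, b.V v ω = g (fun w => b.disp w.1 ω)
  | [] => ⟨fun _ => 0, measurable_const, fun _ => rfl⟩
  | (i :: v) => by
      obtain ⟨g, hg, hrep⟩ := factorV b v
      refine ⟨fun x => g (fun w => x ⟨w.1, anc_subset_anc_cons i v w.2⟩)
        + x ⟨v, mem_anc_cons i v⟩ i, ?_, ?_⟩
      · refine Measurable.ereal_add ?_ ?_
        · exact hg.comp (measurable_pi_lambda _ fun w => measurable_pi_apply _)
        · exact (measurable_pi_apply i).comp (measurable_pi_apply _)
      · intro ω
        show b.V v ω + b.disp v ω i = _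
        rw [hrep ω]

lemma indepFun_V_disp (b : BRW Ω P) (v : Label) : IndepFun (b.V v) (b.disp v) P := by
  obtain ⟨g, hg, hrep⟩ := factorV b v
  have hdisj : Disjoint (anc v) ({v} : Finset Label) := by
    rw [Finset.disjoint_singleton_right]
    exact Finset.notMem_erase _ _
  have h := b.indep.indepFun_finset (anc v) {v} hdisj b.meas
  have h2 := h.comp hg
    (measurable_pi_apply (⟨v, Finset.mem_singleton_self v⟩ : ({v} : Finset Label)))
  have e1 : b.V v = (g ∘ fun a (w : anc v) => b.disp w.1 a) := funext hrep
  rw [e1]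
  exact h2

lemma aliveE_V_cons (b : BRW Ω P) (i : ℕ) (v : Label) (ω : Ω) :
    aliveE (b.V (i :: v) ω) = aliveE (b.V v ω) * aliveE (b.disp v ω i) := by
  have : b.V (i :: v) ω = b.V v ω + b.disp v ω i := rfl
  rw [this]
  unfold aliveE
  by_cases h1 : b.V v ω = ⊥
  · rw [if_pos (by rw [EReal.add_eq_bot_iff]; left; exact h1), if_pos h1, zero_mul]
  · by_cases h2 : b.disp v ω i = ⊥
    · rw [if_pos (by rw [EReal.add_eq_bot_iff]; right; exact h2), if_neg h1, if_pos h2, mul_zero]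
    · rw [if_neg (by rw [EReal.add_eq_bot_iff]; tauto), if_neg h1, if_neg h2, mul_one]

lemma lintegral_ZR_succ (b : BRW Ω P) [IsProbabilityMeasure P] (n : ℕ) :
    ∫⁻ ω, b.ZR (n+1) ω ∂P = (∫⁻ ω, b.ZR n ω ∂P) * ∫⁻ ω, b.ZR 1 ω ∂P := by
  have hpt : ∀ ω, b.ZR (n+1) ω
      = ∑' v : {v : Label // v.length = n}, aliveE (b.V v.1 ω) * cntAlive (b.disp v.1 ω) := by
    intro ω
    calc b.ZR (n+1) ω = ∑' u : {u : Label // u.length = n+1}, aliveE (b.V u.1 ω) :=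
          ZR_eq_tsum b (n+1) ω
      _ = ∑' c : {v : Label // v.length = n} × ℕ, aliveE (b.V ((consEquiv n c).1) ω) :=
          ((consEquiv n).tsum_eq (fun u => aliveE (b.V u.1 ω))).symm
      _ = ∑' c : {v : Label // v.length = n} × ℕ, aliveE (b.V (c.2 :: c.1.1) ω) :=
          tsum_congr fun c => rfl
      _ = ∑' v : {v : Label // v.length = n}, ∑' i : ℕ, aliveE (b.V (i :: v.1) ω) :=
          ENNReal.tsum_prod (f := fun (v : {v : Label // v.length = n}) (i : ℕ) => aliveE (b.V (i :: v.1) ω))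
      _ = ∑' v : {v : Label // v.length = n}, aliveE (b.V v.1 ω) * cntAlive (b.disp v.1 ω) := by
          refine tsum_congr fun v => ?_
          rw [cntAlive, ← ENNReal.tsum_mul_left]
          exact tsum_congr fun i => aliveE_V_cons b i v.1 ω
  have hmeas1 : ∀ v : Label, Measurable fun ω => aliveE (b.V v ω) :=
    fun v => measurable_aliveE.comp (b.measurable_V v)
  have hmeas2 : ∀ v : Label, Measurable fun ω => cntAlive (b.disp v ω) :=
    fun v => measurable_cntAlive.comp (b.meas v)
  calc ∫⁻ ω, b.ZR (n+1) ω ∂P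
      = ∫⁻ ω, ∑' v : {v : Label // v.length = n},
          aliveE (b.V v.1 ω) * cntAlive (b.disp v.1 ω) ∂P := lintegral_congr hpt
    _ = ∑' v : {v : Label // v.length = n},
          ∫⁻ ω, aliveE (b.V v.1 ω) * cntAlive (b.disp v.1 ω) ∂P :=
        lintegral_tsum fun v => ((hmeas1 v.1).mul (hmeas2 v.1)).aemeasurable
    _ = ∑' v : {v : Label // v.length = n},
          (∫⁻ ω, aliveE (b.V v.1 ω) ∂P) * ∫⁻ ω, b.ZR 1 ω ∂P := by
        refine tsum_congr fun v => ?_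
        rw [← lintegral_cntAlive_disp b v.1]
        exact lintegral_mul_eq_lintegral_mul_lintegral_of_indepFun (hmeas1 v.1) (hmeas2 v.1)
          ((b.indepFun_V_disp v.1).comp measurable_aliveE measurable_cntAlive)
    _ = (∑' v : {v : Label // v.length = n}, ∫⁻ ω, aliveE (b.V v.1 ω) ∂P)
          * ∫⁻ ω, b.ZR 1 ω ∂P := ENNReal.tsum_mul_right
    _ = (∫⁻ ω, b.ZR n ω ∂P) * ∫⁻ ω, b.ZR 1 ω ∂P := by
        congr 1
        rw [← lintegral_tsum fun v : {v : Label // v.length = n} =>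
          (hmeas1 v.1).aemeasurable]
        exact lintegral_congr fun ω => (ZR_eq_tsum b n ω).symm

lemma ZR_zero (b : BRW Ω P) (ω : Ω) : b.ZR 0 ω = 1 := by
  rw [ZR_eq_tsum]
  rw [tsum_eq_single (⟨[], rfl⟩ : {u : Label // u.length = 0})]
  · have : b.V [] ω = (0 : EReal) := rfl
    simp [aliveE, this]
  · rintro ⟨u, hu⟩ h
    exact absurd (Subtype.ext (List.length_eq_zero_iff.mp hu)) h

lemma lintegral_ZR (b : BRW Ω P) [IsProbabilityMeasure P] (n : ℕ) :
    ∫⁻ ω, b.ZR n ω ∂P = (∫⁻ ω, b.ZR 1 ω ∂P) ^ n := by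
  induction n with
  | zero => simp [ZR_zero]
  | succ n ih => rw [lintegral_ZR_succ, ih, pow_succ]

lemma surv_le (b : BRW Ω P) [IsProbabilityMeasure P] (k : ℕ) :
    P {ω | ∃ u : Label, u.length = k ∧ b.V u ω ≠ ⊥} ≤ (∫⁻ ω, b.ZR 1 ω ∂P) ^ k := by
  have hsub : {ω | ∃ u : Label, u.length = k ∧ b.V u ω ≠ ⊥} ⊆ {ω | 1 ≤ b.ZR k ω} := by
    rintro ω ⟨u, hu, hne⟩
    have h1 : aliveE (b.V u ω) = 1 := if_neg hne
    calc (1:ℝ≥0∞) = aliveE (b.V u ω) := h1.symm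
      _ ≤ b.ZR k ω := by rw [ZR_eq_tsum]; exact ENNReal.le_tsum (⟨u, hu⟩ : {u : Label // u.length = k})
  calc P {ω | ∃ u : Label, u.length = k ∧ b.V u ω ≠ ⊥} ≤ P {ω | 1 ≤ b.ZR k ω} :=
        measure_mono hsub
    _ = 1 * P {ω | 1 ≤ b.ZR k ω} := (one_mul _).symm
    _ ≤ ∫⁻ ω, b.ZR k ω ∂P := mul_meas_ge_le_lintegral (b.measurable_ZR k) 1
    _ = (∫⁻ ω, b.ZR 1 ω ∂P) ^ k := b.lintegral_ZR k

end BRW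

end BRWAux

section Toolkit2

lemma measurable_plog : Measurable plog := by
  unfold plog
  refine Measurable.ite (measurableSet_singleton ⊤) measurable_const ?_
  exact ((ENNReal.measurable_toReal.max measurable_const).log).ennreal_ofReal

lemma tsum_indicator_pow_le {r : ℝ} (hr : 1 < r) {z : ℝ≥0∞} (hz : z ≠ ⊤) :
    (∑' k : ℕ, if ENNReal.ofReal (r ^ k) < z then (1:ℝ≥0∞) else 0)
      ≤ ENNReal.ofReal (Real.log r)⁻¹ * plog z + 1 := by
  set n := ⌊Real.log (max z.toReal 1) / Real.log r⌋₊ with hn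
  have hr0 : (0:ℝ) < r := lt_trans one_pos hr
  have hlogr : 0 < Real.log r := Real.log_pos hr
  have hlogz : 0 ≤ Real.log (max z.toReal 1) := Real.log_nonneg (le_max_right _ _)
  have hkey : ∀ k : ℕ, ENNReal.ofReal (r ^ k) < z → k ≤ n := by
    intro k hk
    have h1 : r ^ k < z.toReal :=
      (ENNReal.ofReal_lt_iff_lt_toReal (by positivity) hz).1 hk
    have h2 : r ^ k < max z.toReal 1 := lt_of_lt_of_le h1 (le_max_left _ _)
    have h3 : (k:ℝ) * Real.log r ≤ Real.log (max z.toReal 1) := by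
      rw [← Real.log_pow]
      exact Real.log_le_log (by positivity) h2.le
    apply Nat.le_floor
    rw [le_div_iff₀ hlogr]
    exact h3
  calc (∑' k : ℕ, if ENNReal.ofReal (r ^ k) < z then (1:ℝ≥0∞) else 0)
      = ∑ k ∈ Finset.range (n+1), (if ENNReal.ofReal (r ^ k) < z then (1:ℝ≥0∞) else 0) := by
        refine tsum_eq_sum ?_
        intro k hk
        rw [if_neg]
        intro hlt
        exact hk (Finset.mem_range.2 (Nat.lt_succ_of_le (hkey k hlt)))
    _ ≤ ∑ _k ∈ Finset.range (n+1), (1:ℝ≥0∞) := Finset.sum_le_sum fun k _ => by split <;> simp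
    _ = ((n:ℝ≥0∞) + 1) := by simp [Finset.sum_const, Finset.card_range]
    _ ≤ ENNReal.ofReal (Real.log r)⁻¹ * plog z + 1 := by
        refine add_le_add_left ?_ 1
        rw [show plog z = ENNReal.ofReal (Real.log (max z.toReal 1)) from if_neg hz,
          ← ENNReal.ofReal_mul (by positivity), ← ENNReal.ofReal_natCast n]
        refine ENNReal.ofReal_le_ofReal ?_
        rw [inv_mul_eq_div]
        exact Nat.floor_le (by positivity)

end Toolkit2

section SpineAux

variable {Ω : Type} [MeasurableSpace Ω] {P : Measure Ω} {θ ψ ψ' : ℝ}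

namespace SpineSetup

lemma indepFF (s : SpineSetup Ω P θ ψ ψ') (k i : ℕ) :
    IndepFun (fun ω => (s.B k ω, s.W k ω)) (fun ω (u : Label) => s.Vc i k u ω) P :=
  s.indepAll.indepFun (i := Sum.inl k) (j := Sum.inr (i, k)) Sum.inl_ne_inr

lemma measurable_W1 (s : SpineSetup Ω P θ ψ ψ') (hθ : 0 < θ) :
    Measurable (s.toBRW.W1 θ) := by
  refine Measurable.ennreal_tsum fun i => ?_
  refine Measurable.ite ((s.toBRW.measurable_V [i]) (measurableSet_singleton ⊥))
    measurable_const ?_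
  exact measurable_eexp.comp ((measurable_const_mul_ereal hθ).comp (s.toBRW.measurable_V [i]))

lemma lintegral_W1 (s : SpineSetup Ω P θ ψ ψ') :
    ∫⁻ ω, s.toBRW.W1 θ ω ∂P = ENNReal.ofReal (Real.exp ψ) := s.lapEq

/-- upper bound for the probability of a spine-children event via the size-biased law. -/
lemma sb_measure_le (s : SpineSetup Ω P θ ψ ψ') [IsProbabilityMeasure P] (hθ : 0 < θ)
    (k : ℕ) {t : Set ((ℕ → EReal) × ℕ)} (ht : MeasurableSet t) :
    P ((fun ω => (s.B k ω, s.W k ω)) ⁻¹' t)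
      ≤ ∫⁻ ω, ∑' i, (if s.toBRW.V [i] ω = ⊥ then 0 else
          eexp ((θ : EReal) * s.toBRW.V [i] ω - (ψ : EReal)) *
            t.indicator (fun _ => 1) (fun j => s.toBRW.V [j] ω, i)) ∂P := by
  have hemeas : ∀ i : ℕ, Measurable fun ω =>
      eexp ((θ : EReal) * s.toBRW.V [i] ω - (ψ : EReal)) :=
    fun i => measurable_eexp.comp ((measurable_sub_const_ereal ψ).comp
      ((measurable_const_mul_ereal hθ).comp (s.toBRW.measurable_V [i])))
  have hsetmeas : ∀ i : ℕ, MeasurableSet {ω | s.toBRW.V [i] ω = ⊥} :=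
    fun i => (s.toBRW.measurable_V [i]) (measurableSet_singleton ⊥)
  have hindmeas : ∀ (t' : Set ((ℕ → EReal) × ℕ)), MeasurableSet t' → ∀ i : ℕ,
      Measurable fun ω => t'.indicator (fun _ => (1:ℝ≥0∞)) (fun j => s.toBRW.V [j] ω, i) :=
    fun t' ht' i => (measurable_const.indicator ht').comp
      ((measurable_pi_lambda _ fun j => s.toBRW.measurable_V [j]).prodMk measurable_const)
  have hImeas : ∀ (t' : Set ((ℕ → EReal) × ℕ)), MeasurableSet t' →
      Measurable fun ω => ∑' i, (if s.toBRW.V [i] ω = ⊥ then 0 else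
        eexp ((θ : EReal) * s.toBRW.V [i] ω - (ψ : EReal)) *
          t'.indicator (fun _ => 1) (fun j => s.toBRW.V [j] ω, i)) :=
    fun t' ht' => Measurable.ennreal_tsum fun i =>
      Measurable.ite (hsetmeas i) measurable_const ((hemeas i).mul (hindmeas t' ht' i))
  have h0 := meas_add_lintegral_compl_le P ((fun ω => (s.B k ω, s.W k ω)) ⁻¹' t)
  have hc1 : ∫⁻ ω, ((fun ω => (s.B k ω, s.W k ω)) ⁻¹' t)ᶜ.indicator (fun _ => (1:ℝ≥0∞)) ω ∂P
      = ∫⁻ ω, (tᶜ.indicator (fun _ => (1:ℝ≥0∞))) (s.B k ω, s.W k ω) ∂P :=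
    lintegral_congr fun ω => by
      by_cases h : (s.B k ω, s.W k ω) ∈ t <;>
        simp [Set.indicator_apply, Set.mem_preimage, h]
  have hsb := s.sbLaw k (tᶜ.indicator fun _ => (1:ℝ≥0∞)) (measurable_const.indicator ht.compl)
  rw [hc1, hsb] at h0
  have htot : ∫⁻ ω, ∑' i : ℕ, (if s.toBRW.V [i] ω = ⊥ then 0 else
      eexp ((θ : EReal) * s.toBRW.V [i] ω - (ψ : EReal))) ∂P = 1 := by
    have hpt : ∀ ω, (∑' i : ℕ, (if s.toBRW.V [i] ω = ⊥ then 0 else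
        eexp ((θ : EReal) * s.toBRW.V [i] ω - (ψ : EReal))))
        = s.toBRW.W1 θ ω * ENNReal.ofReal (Real.exp (-ψ)) := by
      intro ω
      have hW : s.toBRW.W1 θ ω = ∑' i : ℕ,
          (if s.toBRW.V [i] ω = ⊥ then 0 else eexp ((θ : EReal) * s.toBRW.V [i] ω)) := rfl
      rw [hW, ← ENNReal.tsum_mul_right]
      refine tsum_congr fun i => ?_
      by_cases h : s.toBRW.V [i] ω = ⊥
      · simp [h]
      · rw [if_neg h, if_neg h, eexp_sub_coe]
    calc ∫⁻ ω, ∑' i : ℕ, (if s.toBRW.V [i] ω = ⊥ then 0 else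
          eexp ((θ : EReal) * s.toBRW.V [i] ω - (ψ : EReal))) ∂P
        = ∫⁻ ω, s.toBRW.W1 θ ω * ENNReal.ofReal (Real.exp (-ψ)) ∂P := lintegral_congr hpt
      _ = (∫⁻ ω, s.toBRW.W1 θ ω ∂P) * ENNReal.ofReal (Real.exp (-ψ)) :=
          lintegral_mul_const _ (s.measurable_W1 hθ)
      _ = 1 := by
          rw [s.lintegral_W1, ← ENNReal.ofReal_mul (Real.exp_nonneg _), ← Real.exp_add]
          simp
  have hadd : (∫⁻ ω, ∑' i, (if s.toBRW.V [i] ω = ⊥ then 0 else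
        eexp ((θ : EReal) * s.toBRW.V [i] ω - (ψ : EReal)) *
          t.indicator (fun _ => 1) (fun j => s.toBRW.V [j] ω, i)) ∂P)
      + (∫⁻ ω, ∑' i, (if s.toBRW.V [i] ω = ⊥ then 0 else
        eexp ((θ : EReal) * s.toBRW.V [i] ω - (ψ : EReal)) *
          tᶜ.indicator (fun _ => 1) (fun j => s.toBRW.V [j] ω, i)) ∂P) = 1 := by
    have hcombine : (∫⁻ ω, ∑' i, (if s.toBRW.V [i] ω = ⊥ then 0 else
        eexp ((θ : EReal) * s.toBRW.V [i] ω - (ψ : EReal)) *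
          t.indicator (fun _ => 1) (fun j => s.toBRW.V [j] ω, i)) ∂P)
      + (∫⁻ ω, ∑' i, (if s.toBRW.V [i] ω = ⊥ then 0 else
        eexp ((θ : EReal) * s.toBRW.V [i] ω - (ψ : EReal)) *
          tᶜ.indicator (fun _ => 1) (fun j => s.toBRW.V [j] ω, i)) ∂P)
        = ∫⁻ ω, ∑' i : ℕ, (if s.toBRW.V [i] ω = ⊥ then 0 else
            eexp ((θ : EReal) * s.toBRW.V [i] ω - (ψ : EReal))) ∂P := by
      rw [← lintegral_add_left (hImeas t ht)]
      refine lintegral_congr fun ω => ?_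
      rw [← ENNReal.tsum_add]
      refine tsum_congr fun i => ?_
      by_cases h : s.toBRW.V [i] ω = ⊥
      · simp [h]
      · rw [if_neg h, if_neg h, if_neg h, ← mul_add]
        have hone : t.indicator (fun _ => (1:ℝ≥0∞)) (fun j => s.toBRW.V [j] ω, i)
            + tᶜ.indicator (fun _ => 1) (fun j => s.toBRW.V [j] ω, i) = 1 := by
          by_cases hmem : ((fun j => s.toBRW.V [j] ω, i) : (ℕ → EReal) × ℕ) ∈ t <;>
            simp [Set.indicator_apply, hmem]
        rw [hone, mul_one]
    rw [hcombine, htot]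
  have hne : (∫⁻ ω, ∑' i, (if s.toBRW.V [i] ω = ⊥ then 0 else
      eexp ((θ : EReal) * s.toBRW.V [i] ω - (ψ : EReal)) *
        tᶜ.indicator (fun _ => 1) (fun j => s.toBRW.V [j] ω, i)) ∂P) ≠ ⊤ := by
    intro htop
    rw [htop] at hadd
    simp at hadd
  exact (ENNReal.add_le_add_iff_right hne).1 (h0.trans_eq hadd.symm)

lemma sb_measure_le_W1 (s : SpineSetup Ω P θ ψ ψ') [IsProbabilityMeasure P] (hθ : 0 < θ)
    (k : ℕ) {t : Set ((ℕ → EReal) × ℕ)} (ht : MeasurableSet t) {E : Set Ω}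
    (hcong : ∀ (ω : Ω) (i : ℕ), t.indicator (fun _ => (1:ℝ≥0∞)) (fun j => s.toBRW.V [j] ω, i)
      = E.indicator (fun _ => 1) ω) :
    P ((fun ω => (s.B k ω, s.W k ω)) ⁻¹' t)
      ≤ ENNReal.ofReal (Real.exp (-ψ)) *
          ∫⁻ ω, s.toBRW.W1 θ ω * E.indicator (fun _ => 1) ω ∂P := by
  refine (s.sb_measure_le hθ k ht).trans (le_of_eq ?_)
  have hpt : ∀ ω, (∑' i, (if s.toBRW.V [i] ω = ⊥ then 0 else
      eexp ((θ : EReal) * s.toBRW.V [i] ω - (ψ : EReal)) *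
        t.indicator (fun _ => 1) (fun j => s.toBRW.V [j] ω, i)))
      = ENNReal.ofReal (Real.exp (-ψ)) * (s.toBRW.W1 θ ω * E.indicator (fun _ => 1) ω) := by
    intro ω
    have hW : s.toBRW.W1 θ ω = ∑' i : ℕ,
        (if s.toBRW.V [i] ω = ⊥ then 0 else eexp ((θ : EReal) * s.toBRW.V [i] ω)) := rfl
    calc (∑' i, (if s.toBRW.V [i] ω = ⊥ then 0 else
        eexp ((θ : EReal) * s.toBRW.V [i] ω - (ψ : EReal)) *
          t.indicator (fun _ => 1) (fun j => s.toBRW.V [j] ω, i)))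
        = ∑' i : ℕ, (if s.toBRW.V [i] ω = ⊥ then 0 else eexp ((θ : EReal) * s.toBRW.V [i] ω))
            * (ENNReal.ofReal (Real.exp (-ψ)) * E.indicator (fun _ => 1) ω) := by
          refine tsum_congr fun i => ?_
          by_cases h : s.toBRW.V [i] ω = ⊥
          · simp [h]
          · rw [if_neg h, if_neg h, hcong ω i, eexp_sub_coe]
            ring
      _ = s.toBRW.W1 θ ω * (ENNReal.ofReal (Real.exp (-ψ)) * E.indicator (fun _ => 1) ω) := by
          rw [ENNReal.tsum_mul_right, ← hW]
      _ = ENNReal.ofReal (Real.exp (-ψ)) * (s.toBRW.W1 θ ω * E.indicator (fun _ => 1) ω) := by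
          ring
  rw [lintegral_congr hpt, lintegral_const_mul' _ _ ENNReal.ofReal_ne_top]

lemma copy_measure_le (s : SpineSetup Ω P θ ψ ψ') [IsProbabilityMeasure P] (i k : ℕ)
    {t : Set (Label → EReal)} (ht : MeasurableSet t) :
    P ((fun ω (u : Label) => s.Vc i k u ω) ⁻¹' t)
      ≤ P ((fun ω (u : Label) => s.toBRW.V u ω) ⁻¹' t) := by
  have hVmeas : Measurable (fun ω (u : Label) => s.toBRW.V u ω) :=
    measurable_pi_lambda _ fun u => s.toBRW.measurable_V u
  have h0 := meas_add_lintegral_compl_le P ((fun ω (u : Label) => s.Vc i k u ω) ⁻¹' t)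
  have hc1 : ∫⁻ ω, ((fun ω (u : Label) => s.Vc i k u ω) ⁻¹' t)ᶜ.indicator (fun _ => (1:ℝ≥0∞)) ω ∂P
      = ∫⁻ ω, (tᶜ.indicator (fun _ => (1:ℝ≥0∞))) (fun u => s.Vc i k u ω) ∂P :=
    lintegral_congr fun ω => by
      by_cases h : (fun u => s.Vc i k u ω) ∈ t <;>
        simp [Set.indicator_apply, Set.mem_preimage, h]
  have hcpy := s.copyLaw i k (tᶜ.indicator fun _ => (1:ℝ≥0∞))
    (measurable_const.indicator ht.compl)
  have hV : ∫⁻ ω, (tᶜ.indicator (fun _ => (1:ℝ≥0∞))) (fun u => s.toBRW.V u ω) ∂P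
      = P ((fun ω (u : Label) => s.toBRW.V u ω) ⁻¹' tᶜ) := by
    rw [← lintegral_indicator_one (hVmeas ht.compl)]
    refine lintegral_congr fun ω => ?_
    by_cases h : (fun u => s.toBRW.V u ω) ∈ t <;>
      simp [Set.indicator_apply, Set.mem_preimage, Set.mem_compl_iff, h]
  rw [hc1, hcpy, hV] at h0
  have hple : P ((fun ω (u : Label) => s.toBRW.V u ω) ⁻¹' t) ≤ 1 := prob_le_one
  have hpre : P ((fun ω (u : Label) => s.toBRW.V u ω) ⁻¹' tᶜ)
      = 1 - P ((fun ω (u : Label) => s.toBRW.V u ω) ⁻¹' t) := by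
    rw [Set.preimage_compl]
    exact prob_compl_eq_one_sub (hVmeas ht)
  rw [hpre] at h0
  have h2 : (1:ℝ≥0∞) = P ((fun ω (u : Label) => s.toBRW.V u ω) ⁻¹' t)
      + (1 - P ((fun ω (u : Label) => s.toBRW.V u ω) ⁻¹' t)) :=
    (add_tsub_cancel_of_le hple).symm
  have hne : (1:ℝ≥0∞) - P ((fun ω (u : Label) => s.toBRW.V u ω) ⁻¹' t) ≠ ⊤ :=
    ne_top_of_le_ne_top ENNReal.one_ne_top tsub_le_self
  exact (ENNReal.add_le_add_iff_right hne).1 (h0.trans_eq h2)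

end SpineSetup

end SpineAux

/-- (Proposition 5.1) If the branching random walk is subcritical
(`E Z_1(ℝ) < 1`), `ψ(θ) < ∞`, (as3) holds and `E(Z_1(ℝ) log₊ Z_1(ℝ)) < ∞`, then the
decoration measure is a.s. finite. -/
theorem subcritical_decoration_finite
    {Ω : Type} [MeasurableSpace Ω] {P : Measure Ω} [IsProbabilityMeasure P]
    {θ ψ ψ' : ℝ} (s : SpineSetup Ω P θ ψ ψ') (hθ : 0 < θ)
    (hL : s.toBRW.LlogL θ)
    (hsub : ∫⁻ ω, s.toBRW.ZR 1 ω ∂P < 1)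
    (hZlog : ∫⁻ ω, s.toBRW.ZR 1 ω * plog (s.toBRW.ZR 1 ω) ∂P < ⊤) :
    P {ω | s.Dinf ω Set.univ < ⊤} = 1 := by
  classical
  have hmW1 : Measurable (s.toBRW.W1 θ) := s.measurable_W1 hθ
  set m := ∫⁻ ω, s.toBRW.ZR 1 ω ∂P with hm
  have hm1 : m < 1 := hsub
  have hmtop : m ≠ ⊤ := (hm1.trans ENNReal.one_lt_top).ne
  -- geometric constants
  set c : ℝ := max m.toReal (1/2) with hcdef
  have hc0 : (0:ℝ) < c := lt_of_lt_of_le (by norm_num) (le_max_right _ _)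
  have hc1 : c < 1 := by
    have h1 : m.toReal < 1 := by
      have h2 := ENNReal.toReal_strict_mono (by simp) hm1
      simpa using h2
    rw [hcdef]
    exact max_lt h1 (by norm_num)
  have hmc : m ≤ ENNReal.ofReal c := by
    rw [← ENNReal.ofReal_toReal hmtop]
    exact ENNReal.ofReal_le_ofReal (le_max_left _ _)
  set q : ℝ := Real.sqrt c with hqdef
  have hq0 : 0 < q := Real.sqrt_pos.mpr hc0
  have hq1 : q < 1 := by
    rw [hqdef, show (1:ℝ) = Real.sqrt 1 by rw [Real.sqrt_one]]
    exact Real.sqrt_lt_sqrt hc0.le hc1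
  set r : ℝ := q⁻¹ with hrdef
  have hr1 : 1 < r := (one_lt_inv₀ hq0).2 hq1
  have hr0 : 0 < r := lt_trans one_pos hr1
  have hrcq : r * c = q := by
    have hqq : q * q = c := Real.mul_self_sqrt hc0.le
    rw [hrdef, inv_mul_eq_div, div_eq_iff hq0.ne']
    exact hqq.symm
  set aK : ℕ → ℝ≥0∞ := fun k => ENNReal.ofReal (r ^ k) with haK
  -- events on the ingredient spaces
  set tBig : ℕ → Set ((ℕ → EReal) × ℕ) := fun k => {p | aK k < cntAlive p.1} with htBig
  set tInf : Set ((ℕ → EReal) × ℕ) := {p | cntAlive p.1 = ⊤} with htInf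
  set tLe : ℕ → ℕ → Set ((ℕ → EReal) × ℕ) :=
    fun k i => {p | cntAlive p.1 ≤ aK k ∧ p.1 i ≠ ⊥} with htLe
  set tSurv : ℕ → Set (Label → EReal) :=
    fun k => {g | ∃ u : {u : Label // u.length = k}, g u.1 ≠ ⊥} with htSurv
  set tKInf : ℕ → Set (Label → EReal) := fun k => {g | cntAliveL k g = ⊤} with htKInf
  have hmBig : ∀ k, MeasurableSet (tBig k) :=
    fun k => measurableSet_lt measurable_const (measurable_cntAlive.comp measurable_fst)
  have hmInf : MeasurableSet tInf :=
    (measurable_cntAlive.comp measurable_fst) (measurableSet_singleton ⊤)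
  have hmLe : ∀ k i, MeasurableSet (tLe k i) := fun k i =>
    (measurableSet_le (measurable_cntAlive.comp measurable_fst) measurable_const).inter
      (((measurable_pi_apply i).comp measurable_fst) (measurableSet_singleton ⊥)).compl
  have hmSurv : ∀ k, MeasurableSet (tSurv k) := by
    intro k
    have h1 : tSurv k = ⋃ u : {u : Label // u.length = k}, {g : Label → EReal | g u.1 ≠ ⊥} := by
      ext g; simp [htSurv]
    rw [h1]
    exact MeasurableSet.iUnion fun u =>
      ((measurable_pi_apply u.1) (measurableSet_singleton ⊥)).compl
  have hmKInf : ∀ k, MeasurableSet (tKInf k) :=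
    fun k => (measurable_cntAliveL k) (measurableSet_singleton ⊤)
  -- link between cntAlive and ZR 1
  have hZ1 : ∀ ω, cntAlive (fun j => s.toBRW.V [j] ω) = s.toBRW.ZR 1 ω :=
    fun ω => (BRW.ZR_one_eq s.toBRW ω).symm
  -- the "ZR 1 infinite" event is null
  have hEInf : P {ω | s.toBRW.ZR 1 ω = ⊤} = 0 := by
    have h1 := ae_lt_top (s.toBRW.measurable_ZR 1) (by rw [← hm]; exact hmtop)
    rw [ae_iff] at h1
    have h2 : {ω | s.toBRW.ZR 1 ω = ⊤} = {ω | ¬ s.toBRW.ZR 1 ω < ⊤} := by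
      ext ω; simp [lt_top_iff_ne_top]
    rw [h2]
    exact h1
  -- bound for the "many children" event
  have hcongBig : ∀ k (ω : Ω) (i : ℕ),
      (tBig k).indicator (fun _ => (1:ℝ≥0∞)) (fun j => s.toBRW.V [j] ω, i)
        = ({ω | aK k < s.toBRW.ZR 1 ω} : Set Ω).indicator (fun _ => 1) ω := by
    intro k ω i
    have hiff : ((fun j => s.toBRW.V [j] ω, i) : (ℕ → EReal) × ℕ) ∈ tBig k
        ↔ ω ∈ ({ω | aK k < s.toBRW.ZR 1 ω} : Set Ω) := by
      simp only [htBig, Set.mem_setOf_eq]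
      rw [hZ1 ω]
    rw [Set.indicator_apply, Set.indicator_apply, if_congr hiff rfl rfl]
  have hBigk : ∀ k, P ((fun ω => (s.B k ω, s.W k ω)) ⁻¹' tBig k)
      ≤ ENNReal.ofReal (Real.exp (-ψ)) * ∫⁻ ω, s.toBRW.W1 θ ω *
          ({ω | aK k < s.toBRW.ZR 1 ω} : Set Ω).indicator (fun _ => 1) ω ∂P :=
    fun k => s.sb_measure_le_W1 hθ k (hmBig k) (hcongBig k)
  -- the "infinitely many children" event is null
  have hInfk : ∀ k : ℕ, P ((fun ω => (s.B k ω, s.W k ω)) ⁻¹' tInf) = 0 := by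
    intro k
    have hcongInf : ∀ (ω : Ω) (i : ℕ),
        tInf.indicator (fun _ => (1:ℝ≥0∞)) (fun j => s.toBRW.V [j] ω, i)
          = ({ω | s.toBRW.ZR 1 ω = ⊤} : Set Ω).indicator (fun _ => 1) ω := by
      intro ω i
      have hiff : ((fun j => s.toBRW.V [j] ω, i) : (ℕ → EReal) × ℕ) ∈ tInf
          ↔ ω ∈ ({ω | s.toBRW.ZR 1 ω = ⊤} : Set Ω) := by
        simp only [htInf, Set.mem_setOf_eq]
        rw [hZ1 ω]
      rw [Set.indicator_apply, Set.indicator_apply, if_congr hiff rfl rfl]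
    refine le_antisymm ((s.sb_measure_le_W1 hθ k hmInf hcongInf).trans (le_of_eq ?_)) (zero_le)
    have hz : ∫⁻ ω, s.toBRW.W1 θ ω *
        ({ω | s.toBRW.ZR 1 ω = ⊤} : Set Ω).indicator (fun _ => 1) ω ∂P = 0 := by
      have hms : MeasurableSet ({ω | s.toBRW.ZR 1 ω = ⊤} : Set Ω) :=
        (s.toBRW.measurable_ZR 1) (measurableSet_singleton ⊤)
      rw [lintegral_eq_zero_iff (f := fun ω => s.toBRW.W1 θ ω *
        ({ω | s.toBRW.ZR 1 ω = ⊤} : Set Ω).indicator (fun _ => (1:ℝ≥0∞)) ω) (hmW1.mul (measurable_const.indicator hms))]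
      have hae : ∀ᵐ ω ∂P, ω ∉ {ω | s.toBRW.ZR 1 ω = ⊤} := measure_eq_zero_iff_ae_notMem.mp hEInf
      filter_upwards [hae] with ω hω
      have hω' : ω ∉ ({ω | s.toBRW.ZR 1 ω = ⊤} : Set Ω) := hω
      exact mul_eq_zero_of_right _ (Set.indicator_of_notMem hω' _)
    rw [hz, mul_zero]
  -- bound for the "moderately many children and one alive" events
  have hcongLe : ∀ k i (ω : Ω) (j : ℕ),
      (tLe k i).indicator (fun _ => (1:ℝ≥0∞)) (fun j' => s.toBRW.V [j'] ω, j)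
        = ({ω | s.toBRW.ZR 1 ω ≤ aK k} ∩ {ω | s.toBRW.V [i] ω ≠ ⊥} : Set Ω).indicator
            (fun _ => 1) ω := by
    intro k i ω j
    have hiff : ((fun j' => s.toBRW.V [j'] ω, j) : (ℕ → EReal) × ℕ) ∈ tLe k i
        ↔ ω ∈ ({ω | s.toBRW.ZR 1 ω ≤ aK k} ∩ {ω | s.toBRW.V [i] ω ≠ ⊥} : Set Ω) := by
      simp only [htLe, Set.mem_setOf_eq, Set.mem_inter_iff]
      rw [hZ1 ω]
    rw [Set.indicator_apply, Set.indicator_apply, if_congr hiff rfl rfl]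
  have hLek : ∀ k i, P ((fun ω => (s.B k ω, s.W k ω)) ⁻¹' tLe k i)
      ≤ ENNReal.ofReal (Real.exp (-ψ)) * ∫⁻ ω, s.toBRW.W1 θ ω *
          (({ω | s.toBRW.ZR 1 ω ≤ aK k} ∩ {ω | s.toBRW.V [i] ω ≠ ⊥} : Set Ω)).indicator
            (fun _ => 1) ω ∂P :=
    fun k i => s.sb_measure_le_W1 hθ k (hmLe k i) (hcongLe k i)
  -- summing the bounds over i
  have hLeSum : ∀ k, (∑' i : ℕ, ENNReal.ofReal (Real.exp (-ψ)) *
      ∫⁻ ω, s.toBRW.W1 θ ω *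
        (({ω | s.toBRW.ZR 1 ω ≤ aK k} ∩ {ω | s.toBRW.V [i] ω ≠ ⊥} : Set Ω)).indicator
          (fun _ => 1) ω ∂P) ≤ aK k := by
    intro k
    have hAmeas : MeasurableSet {ω | s.toBRW.ZR 1 ω ≤ aK k} :=
      measurableSet_le (s.toBRW.measurable_ZR 1) measurable_const
    have hmeasi : ∀ i : ℕ, Measurable fun ω => s.toBRW.W1 θ ω *
        (({ω | s.toBRW.ZR 1 ω ≤ aK k} ∩ {ω | s.toBRW.V [i] ω ≠ ⊥} : Set Ω)).indicator
          (fun _ => (1:ℝ≥0∞)) ω :=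
      fun i => hmW1.mul (measurable_const.indicator (hAmeas.inter
        (((s.toBRW.measurable_V [i]) (measurableSet_singleton ⊥)).compl)))
    have hsplit : ∀ (i : ℕ) (ω : Ω),
        (({ω | s.toBRW.ZR 1 ω ≤ aK k} ∩ {ω | s.toBRW.V [i] ω ≠ ⊥} : Set Ω)).indicator
            (fun _ => (1:ℝ≥0∞)) ω
          = ({ω | s.toBRW.ZR 1 ω ≤ aK k} : Set Ω).indicator (fun _ => 1) ω
              * aliveE (s.toBRW.V [i] ω) := by
      intro i ω
      by_cases hA : s.toBRW.ZR 1 ω ≤ aK k <;> by_cases hB : s.toBRW.V [i] ω = ⊥ <;>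
        simp [Set.indicator_apply, Set.mem_setOf_eq, hA, hB, aliveE]
    calc (∑' i : ℕ, ENNReal.ofReal (Real.exp (-ψ)) *
        ∫⁻ ω, s.toBRW.W1 θ ω *
          (({ω | s.toBRW.ZR 1 ω ≤ aK k} ∩ {ω | s.toBRW.V [i] ω ≠ ⊥} : Set Ω)).indicator
            (fun _ => 1) ω ∂P)
        = ENNReal.ofReal (Real.exp (-ψ)) * ∑' i : ℕ, ∫⁻ ω, s.toBRW.W1 θ ω *
            (({ω | s.toBRW.ZR 1 ω ≤ aK k} ∩ {ω | s.toBRW.V [i] ω ≠ ⊥} : Set Ω)).indicator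
              (fun _ => 1) ω ∂P := ENNReal.tsum_mul_left
      _ = ENNReal.ofReal (Real.exp (-ψ)) * ∫⁻ ω, ∑' i : ℕ, s.toBRW.W1 θ ω *
            (({ω | s.toBRW.ZR 1 ω ≤ aK k} ∩ {ω | s.toBRW.V [i] ω ≠ ⊥} : Set Ω)).indicator
              (fun _ => 1) ω ∂P := by
          rw [← lintegral_tsum (fun i => (hmeasi i).aemeasurable)]
      _ = ENNReal.ofReal (Real.exp (-ψ)) * ∫⁻ ω, s.toBRW.W1 θ ω *
            (({ω | s.toBRW.ZR 1 ω ≤ aK k} : Set Ω).indicator (fun _ => 1) ω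
              * s.toBRW.ZR 1 ω) ∂P := by
          congr 1
          refine lintegral_congr fun ω => ?_
          calc (∑' i : ℕ, s.toBRW.W1 θ ω *
              (({ω | s.toBRW.ZR 1 ω ≤ aK k} ∩ {ω | s.toBRW.V [i] ω ≠ ⊥} : Set Ω)).indicator
                (fun _ => 1) ω)
              = ∑' i : ℕ, s.toBRW.W1 θ ω *
                  (({ω | s.toBRW.ZR 1 ω ≤ aK k} : Set Ω).indicator (fun _ => 1) ω)
                    * aliveE (s.toBRW.V [i] ω) := by
                refine tsum_congr fun i => ?_
                rw [hsplit i ω, mul_assoc]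
            _ = s.toBRW.W1 θ ω *
                  (({ω | s.toBRW.ZR 1 ω ≤ aK k} : Set Ω).indicator (fun _ => 1) ω)
                    * ∑' i : ℕ, aliveE (s.toBRW.V [i] ω) := ENNReal.tsum_mul_left
            _ = s.toBRW.W1 θ ω *
                  (({ω | s.toBRW.ZR 1 ω ≤ aK k} : Set Ω).indicator (fun _ => 1) ω
                    * s.toBRW.ZR 1 ω) := by
                rw [BRW.ZR_one_eq s.toBRW ω, mul_assoc]
      _ ≤ ENNReal.ofReal (Real.exp (-ψ)) * ∫⁻ ω, s.toBRW.W1 θ ω * aK k ∂P := by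
          refine mul_le_mul_right (lintegral_mono fun ω => mul_le_mul_right ?_ _) _
          by_cases hA : ω ∈ ({ω | s.toBRW.ZR 1 ω ≤ aK k} : Set Ω)
          · rw [Set.indicator_of_mem hA, one_mul]
            exact hA
          · rw [Set.indicator_of_notMem hA, zero_mul]
            exact zero_le
      _ = ENNReal.ofReal (Real.exp (-ψ)) * ((∫⁻ ω, s.toBRW.W1 θ ω ∂P) * aK k) := by
          rw [lintegral_mul_const _ hmW1]
      _ = aK k := by
          rw [s.lintegral_W1, ← mul_assoc, ← ENNReal.ofReal_mul (Real.exp_nonneg _),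
            ← Real.exp_add, neg_add_cancel, Real.exp_zero, ENNReal.ofReal_one, one_mul]
  -- survival bound for the copies
  have hSurvk : ∀ i k, P ((fun ω (u : Label) => s.Vc i k u ω) ⁻¹' tSurv k) ≤ m ^ k := by
    intro i k
    refine (s.copy_measure_le i k (hmSurv k)).trans ?_
    have h1 : (fun ω (u : Label) => s.toBRW.V u ω) ⁻¹' tSurv k
        = {ω | ∃ u : Label, u.length = k ∧ s.toBRW.V u ω ≠ ⊥} := by
      ext ω
      simp only [htSurv, Set.mem_preimage, Set.mem_setOf_eq]
      constructor
      · rintro ⟨⟨u, hu⟩, hne⟩; exact ⟨u, hu, hne⟩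
      · rintro ⟨u, hu, hne⟩; exact ⟨⟨u, hu⟩, hne⟩
    rw [h1, hm]
    exact s.toBRW.surv_le k
  -- infinite copies are null
  have hKInfk : ∀ i k, P ((fun ω (u : Label) => s.Vc i k u ω) ⁻¹' tKInf k) = 0 := by
    intro i k
    refine le_antisymm ((s.copy_measure_le i k (hmKInf k)).trans (le_of_eq ?_)) (zero_le)
    have hpre : (fun ω (u : Label) => s.toBRW.V u ω) ⁻¹' tKInf k
        = {ω | s.toBRW.ZR k ω = ⊤} := rfl
    rw [hpre]
    have h1 := ae_lt_top (s.toBRW.measurable_ZR k)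
      (by rw [s.toBRW.lintegral_ZR k, ← hm]; exact ENNReal.pow_ne_top hmtop)
    rw [ae_iff] at h1
    have h2 : {ω | s.toBRW.ZR k ω = ⊤} = {ω | ¬ s.toBRW.ZR k ω < ⊤} := by
      ext ω; simp [lt_top_iff_ne_top]
    rw [h2]
    exact h1
  -- the bad events and their probabilities
  set Bad : ℕ → Set Ω := fun k => (fun ω => (s.B k ω, s.W k ω)) ⁻¹' tBig k ∪
    ⋃ i : ℕ, ((fun ω => (s.B k ω, s.W k ω)) ⁻¹' tLe k i ∩
      (fun ω (u : Label) => s.Vc i k u ω) ⁻¹' tSurv k) with hBad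
  have hBadle : ∀ k, P (Bad k) ≤ ENNReal.ofReal (Real.exp (-ψ)) *
      (∫⁻ ω, s.toBRW.W1 θ ω *
        ({ω | aK k < s.toBRW.ZR 1 ω} : Set Ω).indicator (fun _ => 1) ω ∂P)
      + aK k * m ^ k := by
    intro k
    rw [hBad]
    refine (measure_union_le _ _).trans (add_le_add (hBigk k) ?_)
    refine (measure_iUnion_le _).trans ?_
    have hstep : ∀ i : ℕ, P ((fun ω => (s.B k ω, s.W k ω)) ⁻¹' tLe k i ∩
        (fun ω (u : Label) => s.Vc i k u ω) ⁻¹' tSurv k)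
        ≤ (ENNReal.ofReal (Real.exp (-ψ)) * ∫⁻ ω, s.toBRW.W1 θ ω *
            (({ω | s.toBRW.ZR 1 ω ≤ aK k} ∩ {ω | s.toBRW.V [i] ω ≠ ⊥} : Set Ω)).indicator
              (fun _ => 1) ω ∂P) * m ^ k := by
      intro i
      rw [(s.indepFF k i).measure_inter_preimage_eq_mul _ _ (hmLe k i) (hmSurv k)]
      exact mul_le_mul' (hLek k i) (hSurvk i k)
    refine (ENNReal.tsum_le_tsum hstep).trans ?_
    rw [ENNReal.tsum_mul_right]
    exact mul_le_mul_left (hLeSum k) _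
  -- summability of the second part
  have hsum2 : (∑' k : ℕ, aK k * m ^ k) ≠ ⊤ := by
    have hle : ∀ k : ℕ, aK k * m ^ k ≤ ENNReal.ofReal (q ^ k) := by
      intro k
      calc aK k * m ^ k ≤ aK k * (ENNReal.ofReal c) ^ k :=
            mul_le_mul_right (pow_le_pow_left' hmc k) _
        _ = ENNReal.ofReal (r ^ k) * ENNReal.ofReal (c ^ k) := by
            rw [haK, ENNReal.ofReal_pow hc0.le]
        _ = ENNReal.ofReal (r ^ k * c ^ k) :=
            (ENNReal.ofReal_mul (pow_nonneg hr0.le k)).symm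
        _ = ENNReal.ofReal (q ^ k) := by rw [← mul_pow, hrcq]
    refine ne_top_of_le_ne_top ?_ (ENNReal.tsum_le_tsum hle)
    rw [← ENNReal.ofReal_tsum_of_nonneg (fun k => pow_nonneg hq0.le k)
      (summable_geometric_of_lt_one hq0.le hq1)]
    exact ENNReal.ofReal_ne_top
  -- summability of the first part
  have haeZ1 : ∀ᵐ ω ∂P, s.toBRW.ZR 1 ω ≠ ⊤ := by
    filter_upwards [ae_lt_top (s.toBRW.measurable_ZR 1) (by rw [← hm]; exact hmtop)] with ω h
    exact h.ne
  have hsum1 : (∑' k : ℕ, ENNReal.ofReal (Real.exp (-ψ)) *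
      ∫⁻ ω, s.toBRW.W1 θ ω *
        ({ω | aK k < s.toBRW.ZR 1 ω} : Set Ω).indicator (fun _ => 1) ω ∂P) ≠ ⊤ := by
    have hmeask : ∀ k : ℕ, Measurable fun ω => s.toBRW.W1 θ ω *
        ({ω | aK k < s.toBRW.ZR 1 ω} : Set Ω).indicator (fun _ => (1:ℝ≥0∞)) ω :=
      fun k => hmW1.mul (measurable_const.indicator
        (measurableSet_lt measurable_const (s.toBRW.measurable_ZR 1)))
    rw [ENNReal.tsum_mul_left]
    refine ENNReal.mul_ne_top ENNReal.ofReal_ne_top ?_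
    rw [← lintegral_tsum (fun k => (hmeask k).aemeasurable)]
    have hbound : ∫⁻ ω, ∑' k : ℕ, s.toBRW.W1 θ ω *
        ({ω | aK k < s.toBRW.ZR 1 ω} : Set Ω).indicator (fun _ => 1) ω ∂P
        ≤ ∫⁻ ω, (ENNReal.ofReal (Real.log r)⁻¹ *
            (s.toBRW.W1 θ ω * plog (s.toBRW.W1 θ ω) + s.toBRW.ZR 1 ω)
          + s.toBRW.W1 θ ω) ∂P := by
      refine lintegral_mono_ae ?_
      filter_upwards [haeZ1] with ω hz
      have h2 : (∑' k : ℕ, ({ω | aK k < s.toBRW.ZR 1 ω} : Set Ω).indicator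
          (fun _ => (1:ℝ≥0∞)) ω)
          ≤ ENNReal.ofReal (Real.log r)⁻¹ * plog (s.toBRW.ZR 1 ω) + 1 := by
        refine le_trans (le_of_eq (tsum_congr fun k => ?_)) (tsum_indicator_pow_le hr1 hz)
        rw [Set.indicator_apply]
        rfl
      calc (∑' k : ℕ, s.toBRW.W1 θ ω *
          ({ω | aK k < s.toBRW.ZR 1 ω} : Set Ω).indicator (fun _ => 1) ω)
          = s.toBRW.W1 θ ω * ∑' k : ℕ,
              ({ω | aK k < s.toBRW.ZR 1 ω} : Set Ω).indicator (fun _ => 1) ω :=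
            ENNReal.tsum_mul_left
        _ ≤ s.toBRW.W1 θ ω *
              (ENNReal.ofReal (Real.log r)⁻¹ * plog (s.toBRW.ZR 1 ω) + 1) :=
            mul_le_mul_right h2 _
        _ = ENNReal.ofReal (Real.log r)⁻¹ * (s.toBRW.W1 θ ω * plog (s.toBRW.ZR 1 ω))
              + s.toBRW.W1 θ ω := by ring
        _ ≤ ENNReal.ofReal (Real.log r)⁻¹ *
              (s.toBRW.W1 θ ω * plog (s.toBRW.W1 θ ω) + s.toBRW.ZR 1 ω)
              + s.toBRW.W1 θ ω := by
            refine add_le_add_left (mul_le_mul_right ?_ _) _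
            exact mul_plog_le _ _
    refine ne_top_of_le_ne_top ?_ hbound
    have hmWplog : Measurable fun ω => s.toBRW.W1 θ ω * plog (s.toBRW.W1 θ ω) :=
      hmW1.mul (measurable_plog.comp hmW1)
    have hmeas2 : Measurable fun ω => s.toBRW.W1 θ ω * plog (s.toBRW.W1 θ ω)
        + s.toBRW.ZR 1 ω := hmWplog.add (s.toBRW.measurable_ZR 1)
    rw [lintegral_add_left (hmeas2.const_mul _), lintegral_const_mul _ hmeas2,
      lintegral_add_left hmWplog, s.lintegral_W1]
    refine ENNReal.add_ne_top.2 ⟨ENNReal.mul_ne_top ENNReal.ofReal_ne_top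
      (ENNReal.add_ne_top.2 ⟨hL.ne, ?_⟩), ENNReal.ofReal_ne_top⟩
    rw [← hm]; exact hmtop
  -- Borel--Cantelli
  have hsumBad : (∑' k : ℕ, P (Bad k)) ≠ ⊤ := by
    refine ne_top_of_le_ne_top ?_ (ENNReal.tsum_le_tsum hBadle)
    rw [ENNReal.tsum_add]
    exact ENNReal.add_ne_top.2 ⟨hsum1, hsum2⟩
  have hBC : ∀ᵐ ω ∂P, {k : ℕ | ω ∈ Bad k}.Finite := ae_finite_setOf_mem hsumBad
  have hN1 : ∀ᵐ ω ∂P, ω ∉ ⋃ k : ℕ, (fun ω => (s.B k ω, s.W k ω)) ⁻¹' tInf := by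
    rw [← measure_eq_zero_iff_ae_notMem]
    refine le_antisymm ((measure_iUnion_le _).trans ?_) (zero_le)
    simp [hInfk]
  have hN2 : ∀ᵐ ω ∂P, ω ∉ ⋃ k : ℕ, ⋃ i : ℕ,
      (fun ω (u : Label) => s.Vc i k u ω) ⁻¹' tKInf k := by
    rw [← measure_eq_zero_iff_ae_notMem]
    refine le_antisymm ((measure_iUnion_le _).trans ?_) (zero_le)
    have h1 : ∀ k : ℕ, P (⋃ i : ℕ, (fun ω (u : Label) => s.Vc i k u ω) ⁻¹' tKInf k) = 0 :=
      fun k => le_antisymm ((measure_iUnion_le _).trans (by simp [hKInfk])) (zero_le)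
    simp [h1]
  -- the almost sure statement
  have hae : ∀ᵐ ω ∂P, s.Dinf ω Set.univ < ⊤ := by
    filter_upwards [hBC, hN1, hN2] with ω hfin h1 h2
    have h1' : ∀ k : ℕ, cntAlive (s.B k ω) ≠ ⊤ := by
      intro k hk
      exact h1 (Set.mem_iUnion.2 ⟨k, hk⟩)
    have h2' : ∀ k i : ℕ, cntAliveL k (fun u => s.Vc i k u ω) ≠ ⊤ := by
      intro k i hk
      exact h2 (Set.mem_iUnion.2 ⟨k, Set.mem_iUnion.2 ⟨i, hk⟩⟩)
    set T : ℕ → ℝ≥0∞ := fun k => ∑' i : ℕ, ∑' u : {u : Label // u.length = k},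
      if i = s.W k ω then 0 else cnt Set.univ (s.atom k i u.1 ω) with hT
    have hatomne : ∀ (k i : ℕ) (u : Label), cnt Set.univ (s.atom k i u ω) ≠ 0 →
        s.B k ω i ≠ ⊥ ∧ s.Vc i k u ω ≠ ⊥ := by
      intro k i u hc
      obtain ⟨hbot, -⟩ := ne_bot_ne_top_of_cnt_ne_zero hc
      have hadd : s.B k ω i + s.Vc i k u ω ≠ ⊥ := by
        intro h
        apply hbot
        show s.B k ω i + s.Vc i k u ω - ((s.S (k+1) ω : ℝ) : EReal) = ⊥
        rw [h]
        exact EReal.bot_sub _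
      rw [ne_eq, EReal.add_eq_bot_iff] at hadd
      push_neg at hadd
      exact hadd
    have hT0 : ∀ k, ω ∉ Bad k → T k = 0 := by
      intro k hk
      by_contra hne
      have hex1 : ∃ i : ℕ, (∑' u : {u : Label // u.length = k},
          if i = s.W k ω then 0 else cnt Set.univ (s.atom k i u.1 ω)) ≠ 0 := by
        by_contra hall
        push_neg at hall
        exact hne (by rw [hT]; exact ENNReal.tsum_eq_zero.mpr hall)
      obtain ⟨i, hi⟩ := hex1
      have hex2 : ∃ u : {u : Label // u.length = k},
          (if i = s.W k ω then 0 else cnt Set.univ (s.atom k i u.1 ω)) ≠ 0 := by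
        by_contra hall
        push_neg at hall
        exact hi (ENNReal.tsum_eq_zero.mpr hall)
      obtain ⟨u, hu⟩ := hex2
      have hiW : i ≠ s.W k ω := by
        intro h
        rw [if_pos h] at hu
        exact hu rfl
      rw [if_neg hiW] at hu
      obtain ⟨hB, hVc⟩ := hatomne k i u.1 hu
      apply hk
      rw [hBad]
      rcases le_or_gt (cntAlive (s.B k ω)) (aK k) with hle | hlt
      · refine Or.inr (Set.mem_iUnion.mpr ⟨i, ⟨?_, ?_⟩⟩)
        · exact ⟨hle, hB⟩
        · exact ⟨u, hVc⟩
      · exact Or.inl hlt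
    have hTfin : ∀ k, T k ≠ ⊤ := by
      intro k
      have hle : ∀ i : ℕ, (∑' u : {u : Label // u.length = k},
          if i = s.W k ω then 0 else cnt Set.univ (s.atom k i u.1 ω))
          ≤ aliveE (s.B k ω i) * cntAliveL k (fun u => s.Vc i k u ω) := by
        intro i
        rw [cntAliveL, ← ENNReal.tsum_mul_left]
        refine ENNReal.tsum_le_tsum fun u => ?_
        by_cases hi : i = s.W k ω
        · rw [if_pos hi]; exact zero_le
        · rw [if_neg hi]
          by_cases hc : cnt Set.univ (s.atom k i u.1 ω) = 0
          · rw [hc]; exact zero_le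
          · obtain ⟨hB, hVc⟩ := hatomne k i u.1 hc
            have e1 : aliveE (s.B k ω i) = 1 := if_neg hB
            have e2 : aliveE ((fun u : Label => s.Vc i k u ω) u.1) = 1 := if_neg hVc
            rw [e1, e2, one_mul]
            exact cnt_le_one _ _
      have hfinB : {i : ℕ | s.B k ω i ≠ ⊥}.Finite :=
        finite_alive_of_cntAlive_ne_top (h1' k)
      have hle2 : T k ≤ ∑' i : ℕ, aliveE (s.B k ω i)
          * cntAliveL k (fun u => s.Vc i k u ω) := by
        rw [hT]
        exact ENNReal.tsum_le_tsum hle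
      refine ne_top_of_le_ne_top ?_ hle2
      rw [tsum_eq_sum (s := hfinB.toFinset) (fun i hi => ?_)]
      · refine (ENNReal.sum_lt_top.mpr (fun i _ => ?_)).ne
        refine lt_of_le_of_lt (mul_le_mul_left (aliveE_le_one _) _) ?_
        rw [one_mul]
        exact lt_top_iff_ne_top.2 (h2' k i)
      · have hbot : s.B k ω i = ⊥ := by
          by_contra hne
          exact hi (hfinB.mem_toFinset.mpr hne)
        rw [show aliveE (s.B k ω i) = 0 from if_pos hbot, zero_mul]
    have hfin2 : {k : ℕ | T k ≠ 0}.Finite := by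
      refine hfin.subset fun k hk => ?_
      by_contra hbad
      exact hk (hT0 k hbad)
    have hD : s.Dinf ω Set.univ = cnt Set.univ 0 + ∑' k : ℕ, T k := rfl
    rw [hD, cnt_univ_zero]
    have hsumT : (∑' k : ℕ, T k) = ∑ k ∈ hfin2.toFinset, T k := by
      refine tsum_eq_sum fun k hk => ?_
      by_contra hne
      exact hk (hfin2.mem_toFinset.mpr hne)
    rw [hsumT]
    exact ENNReal.add_lt_top.mpr ⟨ENNReal.one_lt_top,
      ENNReal.sum_lt_top.mpr fun k _ => lt_top_iff_ne_top.2 (hTfin k)⟩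
  -- conclusion
  have hzero : P {ω | ¬ s.Dinf ω Set.univ < ⊤} = 0 := ae_iff.mp hae
  refine le_antisymm prob_le_one ?_
  calc (1:ℝ≥0∞) = P Set.univ := measure_univ.symm
    _ ≤ P ({ω | s.Dinf ω Set.univ < ⊤} ∪ {ω | ¬ s.Dinf ω Set.univ < ⊤}) := by
        refine measure_mono fun ω _ => ?_
        by_cases h : s.Dinf ω Set.univ < ⊤
        · exact Or.inl h
        · exact Or.inr h
    _ ≤ P {ω | s.Dinf ω Set.univ < ⊤} + P {ω | ¬ s.Dinf ω Set.univ < ⊤} :=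
        measure_union_le _ _
    _ = P {ω | s.Dinf ω Set.univ < ⊤} := by rw [hzero, add_zero]
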